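/- Let N ≥ 1, τ>0, and let f : [0,∞) → [0,∞) be a C² function with f(0)=0, f(1)=1, f'(0)>1, f'(1)<1, f'(u)>0 for all u∈(0,1), and f(u)>u for all u∈(0,1). Let Ω₀ ⊂ ℝ^N be a nonempty bounded convex open set, let v₀ : ℝ^N → [0,1) be bounded and uniformly continuous with supp v₀ = closure(Ω₀), and let φ : [−τ,0]×ℝ^N → [0,1] be uniformly continuous with φ(θ,x) ≤ v₀(x) for all (θ,x). Let U* : ℝ → [0,1] be a nonincreasing C² monostable travelling wave of minimal speed c*>0: (U*)'' + c*(U*)' + f(U*(·+c*τ)) − U* = 0 on ℝ, U*(−∞)=1, U*(+∞)=0, and let h∈ℝ be such that sup v₀ ≤ U*(c*τ + h). Then for every ε>0, every solution u^ε of the scaled delayed reaction–diffusion equation with initial datum φ satisfies: for every x₀ ∈ ∂Ω₀ and every unit vector n ∈ ℝ^N with (y − x₀)·n ≤ 0 for all y ∈ Ω₀ (a supporting hyperplane normal at x₀), u^ε(t,x) ≤ U*(((x−x₀)·n − c*t)/ε + h) for all t ∈ [−ετ,∞) and all x∈ℝ^N. -/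

import Mathlib

set_option maxHeartbeats 1000000


open Set Filter Metric
open scoped Topology BigOperators RealInnerProductSpace

/-- The Laplacian of a function on `ℝ^N`, as a sum of pure second derivatives. -/
noncomputable def lap {N : ℕ} (g : EuclideanSpace ℝ (Fin N) → ℝ)
    (x : EuclideanSpace ℝ (Fin N)) : ℝ :=
  ∑ i : Fin N, iteratedFDeriv ℝ 2 g x ![EuclideanSpace.single i 1, EuclideanSpace.single i 1]
/-- `f : [0,∞) → [0,∞)` is a monostable nonlinearity of class `C²`:
`f(0)=0`, `f(1)=1`, `f'(0)>1`, `f'(1)<1`, `f'>0` on `(0,1)` and `f(u)>u` on `(0,1)`. -/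
structure Monostable (f : ℝ → ℝ) : Prop where
  smooth : ContDiffOn ℝ 2 f (Ici 0)
  nonneg : ∀ u, 0 ≤ u → 0 ≤ f u
  map0 : f 0 = 0
  map1 : f 1 = 1
  slope0 : 1 < derivWithin f (Ici 0) 0
  slope1 : derivWithin f (Ici 0) 1 < 1
  derivPos : ∀ u ∈ Ioo (0:ℝ) 1, 0 < derivWithin f (Ici 0) u
  aboveId : ∀ u ∈ Ioo (0:ℝ) 1, u < f u
/-- A monostable delayed travelling wave of speed `c` for the nonlinearity `f`:
a `C²` profile with values in `[0,1]`, `U'' + cU' + f(U(·+cτ)) − U = 0`,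
`U(−∞)=1`, `U(+∞)=0`. -/
def MonoWave (f : ℝ → ℝ) (τ : ℝ) (U : ℝ → ℝ) (c : ℝ) : Prop :=
  ContDiff ℝ 2 U ∧ (∀ z, U z ∈ Icc (0:ℝ) 1) ∧
    (∀ z, deriv (deriv U) z + c * deriv U z + f (U (z + c * τ)) - U z = 0) ∧
    Tendsto U atBot (𝓝 1) ∧ Tendsto U atTop (𝓝 0)
/-- `u` is a solution of the scaled delayed reaction–diffusion equation
`∂_t u = εΔu + (1/ε)[f(u(t−ετ,x)) − u(t,x)]` on `(0,∞)×ℝ^N`, with values in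
`[0,1]`, continuous on `[−ετ,∞)×ℝ^N`, equal to `φ(·/ε,·)` on `[−ετ,0]×ℝ^N`,
`C¹` in `t` and `C²` in `x` for `t > 0`. -/
def IsRDSol {N : ℕ} (f : ℝ → ℝ) (τ ε : ℝ)
    (φ u : ℝ → EuclideanSpace ℝ (Fin N) → ℝ) : Prop :=
  ContinuousOn (fun p : ℝ × EuclideanSpace ℝ (Fin N) => u p.1 p.2)
      (Ici (-(ε * τ)) ×ˢ univ) ∧
    (∀ t ≥ -(ε * τ), ∀ x, u t x ∈ Icc (0:ℝ) 1) ∧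
    (∀ θ ∈ Icc (-(ε * τ)) 0, ∀ x, u θ x = φ (θ / ε) x) ∧
    (∀ t > (0:ℝ), (∀ x, DifferentiableAt ℝ (fun s => u s x) t) ∧ ContDiff ℝ 2 (u t)) ∧
    (∀ t > (0:ℝ), ∀ x, deriv (fun s => u s x) t
      = ε * lap (u t) x + (1 / ε) * (f (u (t - ε * τ) x) - u t x))

section Toolkit
variable {N : ℕ}
local notation "E" => EuclideanSpace ℝ (Fin N)

lemma contDiff_deriv_of_two {ψ : ℝ → ℝ} (hψ : ContDiff ℝ 2 ψ) : ContDiff ℝ 1 (deriv ψ) := by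
  have : ContDiff ℝ (1 + 1) ψ := by norm_num [hψ]
  exact (contDiff_succ_iff_deriv.mp this).2.2

lemma fderiv_comp_inner (ψ : ℝ → ℝ) (hψ : ContDiff ℝ 1 ψ) (m : E) (c : ℝ) :
    fderiv ℝ (fun y : E => ψ (⟪m, y⟫ + c))
      = fun x => deriv ψ (⟪m, x⟫ + c) • (innerSL ℝ m : E →L[ℝ] ℝ) := by
  funext x
  have hA : HasFDerivAt (fun y : E => ⟪m, y⟫ + c) (innerSL ℝ m : E →L[ℝ] ℝ) x :=
    ((innerSL ℝ m).hasFDerivAt).add_const c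
  have hψ' : HasDerivAt ψ (deriv ψ (⟪m, x⟫ + c)) (⟪m, x⟫ + c) :=
    ((hψ.differentiable one_ne_zero) _).hasDerivAt
  exact (hψ'.comp_hasFDerivAt x hA).fderiv

lemma hasFDerivAt_comp_inner (ψ : ℝ → ℝ) (hψ : ContDiff ℝ 1 ψ) (m : E) (c : ℝ) (x : E) :
    HasFDerivAt (fun y : E => ψ (⟪m, y⟫ + c))
      (deriv ψ (⟪m, x⟫ + c) • (innerSL ℝ m : E →L[ℝ] ℝ)) x := by
  have hA : HasFDerivAt (fun y : E => ⟪m, y⟫ + c) (innerSL ℝ m : E →L[ℝ] ℝ) x :=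
    ((innerSL ℝ m).hasFDerivAt).add_const c
  have hψ' : HasDerivAt ψ (deriv ψ (⟪m, x⟫ + c)) (⟪m, x⟫ + c) :=
    ((hψ.differentiable one_ne_zero) _).hasDerivAt
  exact hψ'.comp_hasFDerivAt x hA

lemma contDiff_comp_inner (ψ : ℝ → ℝ) (hψ : ContDiff ℝ 2 ψ) (m : E) (c : ℝ) :
    ContDiff ℝ 2 (fun y : E => ψ (⟪m, y⟫ + c)) :=
  hψ.comp (((innerSL ℝ m : E →L[ℝ] ℝ).contDiff).add contDiff_const)

lemma lap_comp_inner (ψ : ℝ → ℝ) (hψ : ContDiff ℝ 2 ψ) (m : E) (c : ℝ) (x : E) :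
    lap (fun y : E => ψ (⟪m, y⟫ + c)) x = deriv (deriv ψ) (⟪m, x⟫ + c) * ‖m‖ ^ 2 := by
  have h2 : ∀ v w : E, fderiv ℝ (fderiv ℝ (fun y : E => ψ (⟪m, y⟫ + c))) x v w
      = deriv (deriv ψ) (⟪m, x⟫ + c) * (⟪m, v⟫ * ⟪m, w⟫) := by
    intro v w
    rw [fderiv_comp_inner ψ (hψ.of_le one_le_two) m c]
    have hsc : HasFDerivAt (fun y : E => deriv ψ (⟪m, y⟫ + c))
        (deriv (deriv ψ) (⟪m, x⟫ + c) • (innerSL ℝ m : E →L[ℝ] ℝ)) x :=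
      hasFDerivAt_comp_inner (deriv ψ) (contDiff_deriv_of_two hψ) m c x
    have h : HasFDerivAt (fun x => deriv ψ (⟪m, x⟫ + c) • (innerSL ℝ m : E →L[ℝ] ℝ)) _ x :=
      hsc.smul (hasFDerivAt_const (innerSL ℝ m : E →L[ℝ] ℝ) x)
    rw [h.fderiv]
    simp [ContinuousLinearMap.smulRight_apply, ContinuousLinearMap.smul_apply]
    ring
  have key : ∀ i : Fin N,
      iteratedFDeriv ℝ 2 (fun y : E => ψ (⟪m, y⟫ + c)) x
        ![EuclideanSpace.single i 1, EuclideanSpace.single i 1]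
      = deriv (deriv ψ) (⟪m, x⟫ + c) * (m i) ^ 2 := by
    intro i
    rw [iteratedFDeriv_two_apply]
    simp only [Matrix.cons_val_zero, Matrix.cons_val_one, Matrix.head_cons]
    rw [h2]
    have : ⟪m, (EuclideanSpace.single i 1 : E)⟫ = m i := by
      rw [EuclideanSpace.inner_single_right]; simp
    rw [this]; ring
  rw [lap, Finset.sum_congr rfl (fun i _ => key i), ← Finset.mul_sum]
  congr 1
  rw [EuclideanSpace.norm_eq, Real.sq_sqrt (by positivity)]
  simp [Real.norm_eq_abs, sq_abs]

lemma lap_add {a b : E → ℝ} (ha : ContDiff ℝ 2 a) (hb : ContDiff ℝ 2 b) (x : E) :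
    lap (fun y => a y + b y) x = lap a x + lap b x := by
  unfold lap
  rw [← Finset.sum_add_distrib]
  refine Finset.sum_congr rfl fun i _ => ?_
  rw [iteratedFDeriv_add_apply' ha.contDiffAt hb.contDiffAt]
  rfl

lemma lap_neg (a : E → ℝ) (x : E) : lap (fun y => -(a y)) x = -lap a x := by
  unfold lap
  rw [← Finset.sum_neg_distrib]
  refine Finset.sum_congr rfl fun i _ => ?_
  have : (fun y => -(a y)) = -a := rfl
  rw [this, iteratedFDeriv_neg_apply]
  rfl

lemma lap_sub {a b : E → ℝ} (ha : ContDiff ℝ 2 a) (hb : ContDiff ℝ 2 b) (x : E) :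
    lap (fun y => a y - b y) x = lap a x - lap b x := by
  have : (fun y => a y - b y) = fun y => a y + -(b y) := by funext y; ring
  rw [this, lap_add ha hb.neg, lap_neg, sub_eq_add_neg]

lemma lap_const (c : ℝ) (x : E) : lap (fun _ => c) x = 0 := by
  unfold lap
  refine Finset.sum_eq_zero fun i _ => ?_
  rw [iteratedFDeriv_const_of_ne (by norm_num)]
  rfl

lemma lap_const_mul {a : E → ℝ} (ha : ContDiff ℝ 2 a) (c : ℝ) (x : E) :
    lap (fun y => c * a y) x = c * lap a x := by
  unfold lap
  rw [Finset.mul_sum]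
  refine Finset.sum_congr rfl fun i _ => ?_
  have : (fun y => c * a y) = fun y => c • a y := rfl
  rw [this, iteratedFDeriv_const_smul_apply' ha.contDiffAt]
  rfl

lemma lap_sum {ι : Type*} (s : Finset ι) (F : ι → E → ℝ)
    (hF : ∀ i ∈ s, ContDiff ℝ 2 (F i)) (x : E) :
    lap (fun y => ∑ i ∈ s, F i y) x = ∑ i ∈ s, lap (F i) x := by
  classical
  induction s using Finset.induction_on with
  | empty => simpa using lap_const 0 x
  | insert _ _ hni ih =>
    rename_i j s
    rw [Finset.sum_insert hni]
    have h1 : ContDiff ℝ 2 (F j) := hF j (Finset.mem_insert_self j s)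
    have h2 : ContDiff ℝ 2 (fun y => ∑ i ∈ s, F i y) :=
      ContDiff.sum fun i hi => hF i (Finset.mem_insert_of_mem hi)
    rw [show (fun y => ∑ i ∈ insert j s, F i y) = fun y => F j y + (fun y' => ∑ i ∈ s, F i y') y
        from funext fun y => by rw [Finset.sum_insert hni]]
    rw [lap_add h1 h2, ih fun i hi => hF i (Finset.mem_insert_of_mem hi)]

lemma contDiff_sq : ContDiff ℝ 2 (fun s : ℝ => s ^ 2) :=
  (contDiff_id : ContDiff ℝ 2 (id : ℝ → ℝ)).pow 2

lemma deriv_deriv_sq (s : ℝ) : deriv (deriv (fun s : ℝ => s ^ 2)) s = 2 := by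
  have h1 : deriv (fun s : ℝ => s ^ 2) = fun s => 2 * s := by
    funext t
    rw [deriv_pow_field 2]
    norm_num
  rw [h1, deriv_const_mul _ differentiable_id.differentiableAt, deriv_id'']
  norm_num

lemma normsq_rep (x₀ : E) : (fun y : E => ‖y - x₀‖ ^ 2)
    = fun y => ∑ i : Fin N,
        (fun y' : E => (fun s : ℝ => s ^ 2) (⟪(EuclideanSpace.single i 1 : E), y'⟫ + (-(x₀ i)))) y := by
  funext y
  rw [EuclideanSpace.norm_eq, Real.sq_sqrt (by positivity)]
  refine Finset.sum_congr rfl fun i _ => ?_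
  simp only [EuclideanSpace.inner_single_left]
  have happ : (y - x₀) i = y i - x₀ i := rfl
  rw [happ]
  simp [Real.norm_eq_abs, sq_abs, sub_eq_add_neg]

lemma contDiff_normsq (x₀ : E) : ContDiff ℝ 2 (fun y : E => ‖y - x₀‖ ^ 2) := by
  rw [normsq_rep x₀]
  exact ContDiff.sum fun i _ => contDiff_comp_inner _ contDiff_sq _ _

lemma lap_normsq (x₀ x : E) : lap (fun y : E => ‖y - x₀‖ ^ 2) x = 2 * N := by
  rw [normsq_rep x₀, lap_sum _ _ (fun i _ => contDiff_comp_inner _ contDiff_sq _ _) x]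
  have : ∀ i : Fin N,
      lap (fun y' : E => (fun s : ℝ => s ^ 2) (⟪(EuclideanSpace.single i 1 : E), y'⟫ + (-(x₀ i)))) x
        = 2 := by
    intro i
    rw [lap_comp_inner _ contDiff_sq _ _ x, deriv_deriv_sq]
    simp
  rw [Finset.sum_congr rfl fun i _ => this i]
  simp [mul_comm]

private lemma div_nonneg_of_nonpos_of_nonpos' {x y : ℝ} (hx : x ≤ 0) (hy : y ≤ 0) : 0 ≤ x / y :=
  div_nonneg_iff.mpr (Or.inr ⟨hx, hy⟩)

lemma secondDeriv_nonpos_of_isLocalMax {κ : ℝ → ℝ} (hκ : ContDiff ℝ 2 κ)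
    (hmax : IsLocalMax κ 0) : deriv (deriv κ) 0 ≤ 0 := by
  by_contra hpos
  push_neg at hpos
  have hκ1 : ContDiff ℝ 1 (deriv κ) := contDiff_deriv_of_two hκ
  have hcont2 : Continuous (deriv (deriv κ)) := hκ1.continuous_deriv le_rfl
  have hd0 : deriv κ 0 = 0 := hmax.deriv_eq_zero
  obtain ⟨η₂, hη₂, hball⟩ := Metric.eventually_nhds_iff_ball.mp hmax
  have hopen : {s : ℝ | 0 < deriv (deriv κ) s} ∈ 𝓝 (0 : ℝ) :=
    (hcont2.tendsto 0).eventually (eventually_gt_nhds hpos)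
  obtain ⟨η₁, hη₁, hball1⟩ := Metric.eventually_nhds_iff_ball.mp hopen
  set η := min η₁ η₂ / 2 with hη
  have hηpos : 0 < η := by positivity
  have hη1 : η < η₁ := by
    have := min_le_left η₁ η₂; simp only [hη]; linarith
  have hη2 : η < η₂ := by
    have := min_le_right η₁ η₂; simp only [hη]; linarith
  have hpos' : ∀ s ∈ interior (Icc (0 : ℝ) η), 0 < deriv (deriv κ) s := by
    intro s hs
    rw [interior_Icc] at hs
    apply hball1
    rw [mem_ball, Real.dist_eq, sub_zero, abs_of_nonneg (le_of_lt hs.1)]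
    linarith [hs.2]
  have hmono1 : StrictMonoOn (deriv κ) (Icc 0 η) :=
    strictMonoOn_of_deriv_pos (convex_Icc _ _) (hκ1.continuous.continuousOn) hpos'
  have hdpos : ∀ s ∈ Ioo (0 : ℝ) η, 0 < deriv κ s := by
    intro s hs
    have := hmono1 (left_mem_Icc.mpr hηpos.le) ⟨hs.1.le, hs.2.le⟩ hs.1
    rw [hd0] at this; exact this
  have hmono : StrictMonoOn κ (Icc 0 η) := by
    refine strictMonoOn_of_deriv_pos (convex_Icc _ _) (hκ.continuous.continuousOn) ?_
    intro s hs; rw [interior_Icc] at hs; exact hdpos s hs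
  have hlt : κ 0 < κ (η / 2) :=
    hmono (left_mem_Icc.mpr hηpos.le) ⟨by linarith, by linarith⟩ (by linarith)
  have : κ (η / 2) ≤ κ 0 := by
    apply hball
    rw [mem_ball, Real.dist_eq, sub_zero, abs_of_nonneg (by linarith)]
    linarith
  linarith

lemma deriv_nonneg_of_left_max {κ : ℝ → ℝ} {a b : ℝ} (hab : a < b)
    (hdiff : DifferentiableAt ℝ κ b) (hmax : ∀ s ∈ Icc a b, κ s ≤ κ b) :
    0 ≤ deriv κ b := by
  have hslope : Tendsto (slope κ b) (𝓝[≠] b) (𝓝 (deriv κ b)) :=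
    hasDerivAt_iff_tendsto_slope.mp hdiff.hasDerivAt
  have hslope' : Tendsto (slope κ b) (𝓝[<] b) (𝓝 (deriv κ b)) :=
    hslope.mono_left (nhdsWithin_mono b fun s hs => ne_of_lt hs)
  refine ge_of_tendsto hslope' ?_
  filter_upwards [Ioo_mem_nhdsLT hab] with s hs
  have h1 : κ s ≤ κ b := hmax s ⟨hs.1.le, hs.2.le⟩
  rw [slope_def_field]
  have h2 : s - b < 0 := by linarith [hs.2]
  exact div_nonneg_of_nonpos_of_nonpos' (by linarith) h2.le

lemma lap_nonpos_of_isLocalMax {G : EuclideanSpace ℝ (Fin N) → ℝ} (hG : ContDiff ℝ 2 G)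
    {x : EuclideanSpace ℝ (Fin N)} (hx : IsLocalMax G x) : lap G x ≤ 0 := by
  have key : ∀ i : Fin N,
      iteratedFDeriv ℝ 2 G x ![EuclideanSpace.single i 1, EuclideanSpace.single i 1] ≤ 0 := by
    intro i
    set e : E := EuclideanSpace.single i 1 with he
    rw [iteratedFDeriv_two_apply]
    simp only [Matrix.cons_val_zero, Matrix.cons_val_one, Matrix.head_cons]
    set κ : ℝ → ℝ := fun s => G (x + s • e) with hκdef
    have hline : ContDiff ℝ 2 (fun s : ℝ => x + s • e) :=
      contDiff_const.add (contDiff_id.smul contDiff_const)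
    have hlineD : ∀ s : ℝ, HasDerivAt (fun s : ℝ => x + s • e) e s := by
      intro s
      simpa using ((hasDerivAt_id s).smul_const e).const_add x
    have hκ : ContDiff ℝ 2 κ := hG.comp hline
    have hdκ : deriv κ = fun s => fderiv ℝ G (x + s • e) e := by
      funext s
      exact (((hG.differentiable two_ne_zero) (x + s • e)).hasFDerivAt.comp_hasDerivAt s
        (hlineD s)).deriv
    have hfdiff : DifferentiableAt ℝ (fderiv ℝ G) x := by
      have : ContDiff ℝ 1 (fderiv ℝ G) := hG.fderiv_right (by norm_num)
      exact (this.differentiable one_ne_zero) x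
    have hd2 : deriv (deriv κ) 0 = fderiv ℝ (fderiv ℝ G) x e e := by
      rw [hdκ]
      have h1 : HasFDerivAt (fun y : E => fderiv ℝ G y e)
          ((ContinuousLinearMap.apply ℝ ℝ e).comp (fderiv ℝ (fderiv ℝ G) x)) x :=
        (ContinuousLinearMap.apply ℝ ℝ e).hasFDerivAt.comp x hfdiff.hasFDerivAt
      have h1' : HasFDerivAt (fun y : E => fderiv ℝ G y e)
          ((ContinuousLinearMap.apply ℝ ℝ e).comp (fderiv ℝ (fderiv ℝ G) x)) (x + (0 : ℝ) • e) := by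
        simpa using h1
      have h2 := h1'.comp_hasDerivAt 0 (hlineD 0)
      simpa [Function.comp_def] using h2.deriv
    rw [← hd2]
    apply secondDeriv_nonpos_of_isLocalMax hκ
    have hcont : ContinuousAt (fun s : ℝ => x + s • e) 0 := (hline.continuous).continuousAt
    have h0 : x + (0 : ℝ) • e = x := by simp
    refine IsLocalMax.comp_continuous ?_ hcont
    rw [h0]; exact hx
  calc lap G x ≤ ∑ _i : Fin N, (0 : ℝ) := Finset.sum_le_sum fun i _ => key i
  _ = 0 := by simp

end Toolkit

/-- Global-in-time upper barriers: planar translates of the minimal-speed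
monostable travelling wave dominate the solution of the scaled delayed
reaction–diffusion equation. -/
theorem stmt_17 {N : ℕ} (hN : 1 ≤ N) (τ : ℝ) (hτ : 0 < τ)
    (f : ℝ → ℝ) (hf : Monostable f)
    (Ω₀ : Set (EuclideanSpace ℝ (Fin N))) (hΩne : Ω₀.Nonempty)
    (hΩbdd : Bornology.IsBounded Ω₀) (hΩconv : Convex ℝ Ω₀) (hΩopen : IsOpen Ω₀)
    (v0 : EuclideanSpace ℝ (Fin N) → ℝ) (hv0uc : UniformContinuous v0)
    (hv0r : ∀ x, v0 x ∈ Ico (0:ℝ) 1)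
    (hv0supp : closure (Function.support v0) = closure Ω₀)
    (φ : ℝ → EuclideanSpace ℝ (Fin N) → ℝ)
    (hφuc : UniformContinuousOn (fun p : ℝ × EuclideanSpace ℝ (Fin N) => φ p.1 p.2)
      (Icc (-τ) 0 ×ˢ univ))
    (hφr : ∀ θ ∈ Icc (-τ) 0, ∀ x, φ θ x ∈ Icc (0:ℝ) 1)
    (hφv0 : ∀ θ ∈ Icc (-τ) 0, ∀ x, φ θ x ≤ v0 x)
    (Ustar : ℝ → ℝ) (cstar : ℝ) (hcstar : 0 < cstar)
    (hwave : MonoWave f τ Ustar cstar) (hmono : Antitone Ustar)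
    (hmin : ∀ c U, MonoWave f τ U c → cstar ≤ c)
    (h : ℝ) (hh : ∀ x, v0 x ≤ Ustar (cstar * τ + h)) :
    ∀ ε > (0:ℝ), ∀ u, IsRDSol f τ ε φ u →
      ∀ x₀ ∈ frontier Ω₀, ∀ n : EuclideanSpace ℝ (Fin N), ‖n‖ = 1 →
      (∀ y ∈ Ω₀, ⟪y - x₀, n⟫ ≤ (0:ℝ)) →
      ∀ t ≥ -(ε * τ), ∀ x,
        u t x ≤ Ustar ((⟪x - x₀, n⟫ - cstar * t) / ε + h) := by
  intro ε hε u hsol x₀ hx₀ n hn hplane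
  obtain ⟨hcontu, hrange, hinit, hreg, hPDE⟩ := hsol
  obtain ⟨hUC, hUrange, hUeq, _, _⟩ := hwave
  have hετ : 0 < ε * τ := mul_pos hε hτ
  -- monotonicity of f on [0,1]
  have hfmono : MonotoneOn f (Icc (0:ℝ) 1) := by
    have hcont : ContinuousOn f (Icc (0:ℝ) 1) :=
      (hf.smooth.continuousOn).mono (Icc_subset_Ici_self)
    refine (strictMonoOn_of_deriv_pos (convex_Icc _ _) hcont ?_).monotoneOn
    intro s hs
    rw [interior_Icc] at hs
    have : derivWithin f (Ici 0) s = deriv f s :=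
      derivWithin_of_mem_nhds (Ici_mem_nhds hs.1)
    rw [← this]
    exact hf.derivPos s hs
  -- setup
  set m : EuclideanSpace ℝ (Fin N) := ε⁻¹ • n with hm
  have hmnorm : ‖m‖ ^ 2 = (1/ε) ^ 2 := by
    rw [hm, norm_smul, hn]
    simp [abs_of_pos hε]
  set K : ℝ := 2 * N * ε with hK
  have hKpos : 0 ≤ K := by positivity
  set W : ℝ → EuclideanSpace ℝ (Fin N) → ℝ :=
    fun t x => Ustar (⟪m, x⟫ + (-⟪m, x₀⟫ - cstar / ε * t + h)) with hW
  have hform : ∀ t : ℝ, ∀ x : EuclideanSpace ℝ (Fin N),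
      (⟪x - x₀, n⟫ - cstar * t) / ε + h = ⟪m, x⟫ + (-⟪m, x₀⟫ - cstar / ε * t + h) := by
    intro t x
    have h1 : ⟪m, x⟫ = ε⁻¹ * ⟪n, x⟫ := real_inner_smul_left n x ε⁻¹
    have h2 : ⟪m, x₀⟫ = ε⁻¹ * ⟪n, x₀⟫ := real_inner_smul_left n x₀ ε⁻¹
    have h3 : ⟪x - x₀, n⟫ = ⟪n, x⟫ - ⟪n, x₀⟫ := by
      rw [real_inner_comm, inner_sub_right]
    rw [h1, h2, h3]
    field_simp
    ring
  have hWrange : ∀ t x, W t x ∈ Icc (0:ℝ) 1 := fun t x => hUrange _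
  -- initial segment
  have hbase : ∀ t ∈ Icc (-(ε * τ)) 0, ∀ x, u t x ≤ W t x := by
    intro t ht x
    have hφx : u t x = φ (t / ε) x := hinit t ht x
    have htε : t / ε ∈ Icc (-τ) 0 := by
      constructor
      · rw [le_div_iff₀ hε]; linarith [ht.1]
      · exact div_nonpos_of_nonpos_of_nonneg ht.2 hε.le
    have hbound : u t x ≤ v0 x := by
      rw [hφx]; exact hφv0 _ htε x
    have hWx : W t x = Ustar ((⟪x - x₀, n⟫ - cstar * t) / ε + h) := by
      simp only [hW]; rw [← hform t x]
    rw [hWx]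
    by_cases hxc : x ∈ closure Ω₀
    · -- inner product ≤ 0 on the closure
      have hcl : ∀ y ∈ closure Ω₀, ⟪y - x₀, n⟫ ≤ (0:ℝ) := by
        have hclosed : IsClosed {y : EuclideanSpace ℝ (Fin N) | ⟪y - x₀, n⟫ ≤ (0:ℝ)} := by
          apply isClosed_le _ continuous_const
          exact (continuous_id.sub continuous_const).inner continuous_const
        intro y hy
        exact closure_minimal (fun z hz => hplane z hz) hclosed hy
      have hip : ⟪x - x₀, n⟫ ≤ 0 := hcl x hxc
      have harg : (⟪x - x₀, n⟫ - cstar * t) / ε + h ≤ cstar * τ + h := by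
        have h1 : -cstar * t ≤ cstar * (ε * τ) := by
          have := ht.1
          nlinarith
        have h2 : (⟪x - x₀, n⟫ - cstar * t) / ε ≤ cstar * (ε * τ) / ε := by
          gcongr
          linarith
        have h3 : cstar * (ε * τ) / ε = cstar * τ := by field_simp
        rw [h3] at h2
        linarith
      calc u t x ≤ v0 x := hbound
        _ ≤ Ustar (cstar * τ + h) := hh x
        _ ≤ Ustar ((⟪x - x₀, n⟫ - cstar * t) / ε + h) := hmono harg
    · have hxsupp : x ∉ Function.support v0 := by
        intro hmem
        exact hxc (hv0supp ▸ subset_closure hmem)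
      have hv00 : v0 x = 0 := Function.notMem_support.mp hxsupp
      calc u t x ≤ v0 x := hbound
        _ = 0 := hv00
        _ ≤ Ustar ((⟪x - x₀, n⟫ - cstar * t) / ε + h) := (hUrange _).1
  -- one step
  have hstep : ∀ T₀ : ℝ, 0 ≤ T₀ →
      (∀ t ∈ Icc (-(ε * τ)) T₀, ∀ x, u t x ≤ W t x) →
      ∀ t ∈ Icc T₀ (T₀ + ε * τ), ∀ x, u t x ≤ W t x := by
    intro T₀ hT₀ IH
    set T₁ : ℝ := T₀ + ε * τ with hT₁
    have hT₁pos : 0 ≤ T₁ := by rw [hT₁]; positivity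
    have claim : ∀ δ : ℝ, 0 < δ → ∀ t ∈ Icc T₀ T₁, ∀ x,
        u t x - W t x ≤ δ * (1 + K * t + ‖x - x₀‖ ^ 2) := by
      intro δ hδ
      set R : ℝ := Real.sqrt ((2 + δ * (1 + K * T₁)) / δ) with hR
      have hRnn : 0 ≤ R := Real.sqrt_nonneg _
      have hKT₁ : 0 ≤ K * T₁ := mul_nonneg hKpos hT₁pos
      have hRsq : δ * (1 + R ^ 2) = δ + (2 + δ * (1 + K * T₁)) := by
        rw [hR, Real.sq_sqrt (by positivity)]
        field_simp
      set b : ℝ → EuclideanSpace ℝ (Fin N) → ℝ :=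
        fun t y => δ * (1 + K * t + ‖y - x₀‖ ^ 2) with hb
      set g : ℝ × EuclideanSpace ℝ (Fin N) → ℝ :=
        fun p => u p.1 p.2 - W p.1 p.2 - b p.1 p.2 with hgdef
      set Cs : Set (ℝ × EuclideanSpace ℝ (Fin N)) := Icc T₀ T₁ ×ˢ closedBall x₀ R with hCs
      have hCsub : Cs ⊆ Ici (-(ε * τ)) ×ˢ (univ : Set (EuclideanSpace ℝ (Fin N))) := by
        rintro ⟨p1, p2⟩ ⟨hp1, _⟩
        exact ⟨le_trans (by linarith [hp1.1]) hp1.1, mem_univ _⟩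
      have hWcont : Continuous fun p : ℝ × EuclideanSpace ℝ (Fin N) => W p.1 p.2 := by
        simp only [hW]
        apply (hUC.continuous).comp
        have h1 : Continuous fun p : ℝ × EuclideanSpace ℝ (Fin N) => (⟪m, p.2⟫ : ℝ) :=
          Continuous.inner continuous_const continuous_snd
        fun_prop
      have hbcont : Continuous fun p : ℝ × EuclideanSpace ℝ (Fin N) => b p.1 p.2 := by
        simp only [hb]; fun_prop
      have hgcont : ContinuousOn g Cs := by
        simp only [hgdef]
        exact ((hcontu.mono hCsub).sub hWcont.continuousOn).sub hbcont.continuousOn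
      have hT₀Cs : (T₀, x₀) ∈ Cs := ⟨⟨le_refl _, by linarith [hετ]⟩, mem_closedBall_self hRnn⟩
      obtain ⟨⟨ts, xs⟩, hpCs, hpmax⟩ :=
        (isCompact_Icc.prod (isCompact_closedBall x₀ R)).exists_isMaxOn ⟨(T₀, x₀), hT₀Cs⟩ hgcont
      have hts1 : ts ∈ Icc T₀ T₁ := hpCs.1
      have hxs : xs ∈ closedBall x₀ R := hpCs.2
      -- values bounds
      have hur : ∀ t ∈ Icc T₀ T₁, ∀ y, u t y ∈ Icc (0:ℝ) 1 := by
        intro t ht y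
        exact hrange t (by linarith [ht.1, hετ]) y
      -- outer bound
      have hout : ∀ q : ℝ × EuclideanSpace ℝ (Fin N), q.1 ∈ Icc T₀ T₁ →
          R < ‖q.2 - x₀‖ → g q ≤ -1 - δ * (1 + K * T₁) := by
        rintro ⟨t, y⟩ ht hy
        have h1 : u t y ≤ 1 := (hur t ht y).2
        have h2 : 0 ≤ W t y := (hWrange t y).1
        have h3 : R ^ 2 ≤ ‖y - x₀‖ ^ 2 := by nlinarith [norm_nonneg (y - x₀)]
        have h4 : 0 ≤ K * t := mul_nonneg hKpos (by linarith [ht.1])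
        simp only [hgdef, hb]
        nlinarith [hRsq]
      have hlow : -1 - δ * (1 + K * T₁) ≤ g (T₀, x₀) := by
        have h1 : 0 ≤ u T₀ x₀ := (hur T₀ ⟨le_refl _, by linarith [hετ]⟩ x₀).1
        have h2 : W T₀ x₀ ≤ 1 := (hWrange T₀ x₀).2
        have h4 : K * T₀ ≤ K * T₁ := mul_le_mul_of_nonneg_left (by linarith [hετ]) hKpos
        simp only [hgdef, hb]
        have h5 : ‖x₀ - x₀‖ ^ 2 = 0 := by simp
        rw [h5]
        nlinarith
      rcases le_or_gt (g (ts, xs)) 0 with hM | hM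
      · -- max nonpositive: done
        intro t ht x
        rcases le_or_gt ‖x - x₀‖ R with hin | hout'
        · have : g (t, x) ≤ g (ts, xs) :=
            hpmax ⟨ht, by rwa [mem_closedBall, dist_eq_norm]⟩
          simp only [hgdef, hb] at this hM
          linarith
        · have := hout (t, x) ht hout'
          simp only [hgdef, hb] at this
          nlinarith
      · -- max positive: contradiction
        exfalso
        have htsgt : T₀ < ts := by
          rcases eq_or_lt_of_le hts1.1 with heq | hlt
          · exfalso
            have hud : u T₀ xs ≤ W T₀ xs := IH T₀ ⟨by linarith [hετ], le_refl _⟩ xs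
            have hbpos : δ ≤ b T₀ xs := by
              simp only [hb]
              have : 0 ≤ K * T₀ := mul_nonneg hKpos hT₀
              nlinarith [sq_nonneg ‖xs - x₀‖, norm_nonneg (xs - x₀)]
            have : g (ts, xs) = g (T₀, xs) := by rw [← heq]
            rw [this] at hM
            simp only [hgdef] at hM
            linarith
          · exact hlt
        have htpos : 0 < ts := lt_of_le_of_lt hT₀ htsgt
        have hglob : ∀ y, g (ts, y) ≤ g (ts, xs) := by
          intro y
          rcases le_or_gt ‖y - x₀‖ R with hin | hout'
          · exact hpmax ⟨hts1, by rwa [mem_closedBall, dist_eq_norm]⟩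
          · calc g (ts, y) ≤ -1 - δ * (1 + K * T₁) := hout (ts, y) hts1 hout'
              _ ≤ g (T₀, x₀) := hlow
              _ ≤ g (ts, xs) := hpmax hT₀Cs
        obtain ⟨hdifft, hCx⟩ := hreg ts htpos
        set ξs : ℝ := ⟪m, xs⟫ + (-⟪m, x₀⟫ - cstar / ε * ts + h) with hξs
        -- delayed comparison
        have hdelmem : ts - ε * τ ∈ Icc (-(ε * τ)) T₀ :=
          ⟨by linarith [htpos.le], by linarith [hts1.2]⟩
        have hudel : u (ts - ε * τ) xs ≤ Ustar (ξs + cstar * τ) := by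
          have h1 : u (ts - ε * τ) xs ≤ W (ts - ε * τ) xs := IH _ hdelmem xs
          have h2 : W (ts - ε * τ) xs = Ustar (ξs + cstar * τ) := by
            simp only [hW, hξs]
            congr 1
            field_simp
            ring
          rw [← h2]; exact h1
        have hfdel : f (u (ts - ε * τ) xs) ≤ f (Ustar (ξs + cstar * τ)) := by
          apply hfmono (hrange _ (by linarith [htpos.le]) xs) (hUrange _) hudel
        -- time derivative at (ts, xs)
        have hCd : HasDerivAt (fun s : ℝ => ⟪m, xs⟫ + (-⟪m, x₀⟫ - cstar / ε * s + h))
            (-(cstar / ε)) ts := by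
          have h1 : HasDerivAt (fun s : ℝ => cstar / ε * s) (cstar / ε) ts := by
            simpa using (hasDerivAt_id ts).const_mul (cstar / ε)
          simpa using (((hasDerivAt_const ts (-⟪m, x₀⟫)).sub h1).add_const h).const_add ⟪m, xs⟫
        have hUd : HasDerivAt Ustar (deriv Ustar ξs) ξs :=
          ((hUC.differentiable two_ne_zero) ξs).hasDerivAt
        have hWtd : HasDerivAt (fun s => W s xs) (deriv Ustar ξs * -(cstar / ε)) ts := by
          simp only [hW]
          have := hUd.comp ts hCd
          simpa [Function.comp_def] using this
        have hbtd : HasDerivAt (fun s => b s xs) (δ * K) ts := by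
          simp only [hb]
          have h1 : HasDerivAt (fun s : ℝ => K * s) K ts := by
            simpa using (hasDerivAt_id ts).const_mul K
          have h2 : HasDerivAt (fun s : ℝ => 1 + K * s + ‖xs - x₀‖ ^ 2) K ts := by
            simpa using ((hasDerivAt_const ts (1:ℝ)).add h1).add_const (‖xs - x₀‖ ^ 2)
          simpa using h2.const_mul δ
        have hκd : HasDerivAt (fun s => u s xs - W s xs - b s xs)
            (deriv (fun s => u s xs) ts - deriv Ustar ξs * -(cstar / ε) - δ * K) ts :=
          (((hdifft xs).hasDerivAt.sub hWtd).sub hbtd)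
        have h0le : 0 ≤ deriv (fun s => u s xs) ts - deriv Ustar ξs * -(cstar / ε) - δ * K := by
          have hmax' : ∀ s ∈ Icc T₀ ts, (fun s => u s xs - W s xs - b s xs) s
              ≤ (fun s => u s xs - W s xs - b s xs) ts := by
            intro s hs
            have : g (s, xs) ≤ g (ts, xs) := hpmax ⟨⟨hs.1, le_trans hs.2 hts1.2⟩, hxs⟩
            simpa only [hgdef] using this
          have := deriv_nonneg_of_left_max htsgt hκd.differentiableAt hmax'
          rwa [hκd.deriv] at this
        -- space derivative at (ts, xs)
        have hWc : ContDiff ℝ 2 (fun y => W ts y) := by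
          simp only [hW]
          exact contDiff_comp_inner Ustar hUC m _
        have hbc : ContDiff ℝ 2 (fun y => b ts y) := by
          simp only [hb]
          exact contDiff_const.mul (contDiff_const.add (contDiff_normsq x₀))
        have hGc : ContDiff ℝ 2 (fun y => u ts y - W ts y - b ts y) :=
          (hCx.sub hWc).sub hbc
        have hGmax : IsLocalMax (fun y => u ts y - W ts y - b ts y) xs := by
          apply Filter.Eventually.of_forall
          intro y
          have := hglob y
          simpa only [hgdef] using this
        have hlapG : lap (fun y => u ts y - W ts y - b ts y) xs ≤ 0 :=
          lap_nonpos_of_isLocalMax hGc hGmax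
        have hlapsplit : lap (fun y => u ts y - W ts y - b ts y) xs
            = lap (u ts) xs - lap (fun y => W ts y) xs - lap (fun y => b ts y) xs := by
          rw [lap_sub (hCx.sub hWc) hbc, lap_sub hCx hWc]
        have hlapW : lap (fun y => W ts y) xs = deriv (deriv Ustar) ξs * ‖m‖ ^ 2 := by
          simp only [hW]
          rw [lap_comp_inner Ustar hUC m _ xs, ← hξs]
        have hlapb : lap (fun y => b ts y) xs = δ * (2 * N) := by
          simp only [hb]
          rw [lap_const_mul (contDiff_const.add (contDiff_normsq x₀)) δ xs,
            lap_add contDiff_const (contDiff_normsq x₀) xs, lap_const, lap_normsq]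
          ring
        have hlapu : lap (u ts) xs ≤ deriv (deriv Ustar) ξs * (1/ε) ^ 2 + δ * (2 * N) := by
          have := hlapG
          rw [hlapsplit, hlapW, hlapb, hmnorm] at this
          linarith
        -- PDE and wave equation
        have hPDEts := hPDE ts htpos xs
        have hUeqs := hUeq ξs
        -- combine
        have hεL : ε * lap (u ts) xs ≤ deriv (deriv Ustar) ξs / ε + δ * K := by
          have h1 : ε * lap (u ts) xs ≤ ε * (deriv (deriv Ustar) ξs * (1/ε) ^ 2 + δ * (2 * N)) :=
            mul_le_mul_of_nonneg_left hlapu hε.le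
          have h2 : ε * (deriv (deriv Ustar) ξs * (1/ε) ^ 2 + δ * (2 * N))
              = deriv (deriv Ustar) ξs / ε + δ * K := by
            rw [hK]; field_simp
          linarith
        have hεpos : (0:ℝ) < 1/ε := by positivity
        have hkey : u ts xs ≤ Ustar ξs := by
          have e1 : 0 ≤ ε * lap (u ts) xs
              + (1/ε) * (f (u (ts - ε * τ) xs) - u ts xs) + deriv Ustar ξs * (cstar / ε) - δ * K := by
            have hneg : deriv Ustar ξs * -(cstar / ε) = -(deriv Ustar ξs * (cstar / ε)) := by
              ring
            rw [hneg] at h0le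
            linarith [h0le, hPDEts]
          have e2 : 0 ≤ deriv (deriv Ustar) ξs / ε
              + (1/ε) * (f (u (ts - ε * τ) xs) - u ts xs) + deriv Ustar ξs * (cstar / ε) := by
            linarith
          have e3 : deriv (deriv Ustar) ξs / ε
              + (1/ε) * (f (u (ts - ε * τ) xs) - u ts xs) + deriv Ustar ξs * (cstar / ε)
              = (1/ε) * (deriv (deriv Ustar) ξs + cstar * deriv Ustar ξs
                + f (u (ts - ε * τ) xs) - u ts xs) := by
            field_simp
            ring
          have e4 : 0 ≤ (1/ε) * (deriv (deriv Ustar) ξs + cstar * deriv Ustar ξs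
              + f (Ustar (ξs + cstar * τ)) - u ts xs) := by
            rw [e3] at e2
            have : (1/ε) * (deriv (deriv Ustar) ξs + cstar * deriv Ustar ξs
                + f (u (ts - ε * τ) xs) - u ts xs)
                ≤ (1/ε) * (deriv (deriv Ustar) ξs + cstar * deriv Ustar ξs
                + f (Ustar (ξs + cstar * τ)) - u ts xs) := by
              apply mul_le_mul_of_nonneg_left _ hεpos.le
              linarith
            linarith
          have e5 : 0 ≤ deriv (deriv Ustar) ξs + cstar * deriv Ustar ξs
              + f (Ustar (ξs + cstar * τ)) - u ts xs := by
            nlinarith [e4, hεpos]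
          linarith [hUeqs]
        -- contradiction
        have hWts : W ts xs = Ustar ξs := by simp only [hW, hξs]
        have hbts : δ ≤ b ts xs := by
          simp only [hb]
          have : 0 ≤ K * ts := mul_nonneg hKpos htpos.le
          nlinarith [sq_nonneg ‖xs - x₀‖]
        have : g (ts, xs) ≤ -δ := by
          simp only [hgdef]
          rw [hWts]
          linarith
        linarith
    -- conclude from claim
    intro t ht x
    by_contra hlt
    push_neg at hlt
    set d : ℝ := u t x - W t x with hd
    have hdpos : 0 < d := by simp only [hd]; linarith
    set C₀ : ℝ := 1 + K * t + ‖x - x₀‖ ^ 2 with hC₀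
    have hC₀pos : 0 < C₀ := by
      have : 0 ≤ K * t := mul_nonneg hKpos (by linarith [ht.1])
      simp only [hC₀]
      nlinarith [sq_nonneg ‖x - x₀‖]
    have := claim (d / (2 * C₀)) (by positivity) t ht x
    rw [← hC₀, ← hd] at this
    have h2 : d / (2 * C₀) * C₀ = d / 2 := by field_simp
    rw [h2] at this
    linarith
  -- induction
  have hmain : ∀ k : ℕ, ∀ t ∈ Icc (-(ε * τ)) ((k : ℝ) * (ε * τ)), ∀ x, u t x ≤ W t x := by
    intro k
    induction k with
    | zero => simpa using hbase
    | succ k ih =>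
      intro t ht x
      rcases le_or_gt t ((k : ℝ) * (ε * τ)) with hle | hgt
      · exact ih t ⟨ht.1, hle⟩ x
      · have hk0 : (0:ℝ) ≤ (k : ℝ) * (ε * τ) := by positivity
        refine hstep ((k : ℝ) * (ε * τ)) hk0 ih t ⟨hgt.le, ?_⟩ x
        have : ((k : ℝ) + 1) * (ε * τ) = (k : ℝ) * (ε * τ) + ε * τ := by ring
        rw [← this]
        push_cast at ht ⊢
        linarith [ht.2]
  intro t ht x
  obtain ⟨k, hk⟩ := exists_nat_ge (t / (ε * τ))
  have htk : t ≤ (k : ℝ) * (ε * τ) := by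
    rw [div_le_iff₀ hετ] at hk
    linarith
  have := hmain k t ⟨ht, htk⟩ x
  rw [hform t x]
  exact this
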